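/- Let G be an invertible symmetric real n×n matrix and let N_α = [N_ᾱ N_β] be a real n×q matrix partitioned into column blocks, such that N_αᵀG⁻¹N_α is negative definite. Define H_P = G⁻¹ − G⁻¹P(PᵀG⁻¹P)⁻¹PᵀG⁻¹ for P ∈ {N_ᾱ, N_α}. Then H_α − H_ᾱ is positive semi-definite; i.e., nᵀH_ᾱ n ≤ nᵀH_α n for every n ∈ ℝⁿ. -/

import Mathlib

open Matrix

lemma dot_mulVec_left {m k : Type*} [Fintype m] [Fintype k]
    (P : Matrix m k ℝ) (u : k → ℝ) (v : m → ℝ) :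
    (P *ᵥ u) ⬝ᵥ v = u ⬝ᵥ (Pᵀ *ᵥ v) := by
  rw [Matrix.dotProduct_mulVec, Matrix.vecMul_transpose, dotProduct_comm]

lemma dot_sym_swap {m : Type*} [Fintype m] {A : Matrix m m ℝ} (hA : Aᵀ = A)
    (u v : m → ℝ) : u ⬝ᵥ A *ᵥ v = v ⬝ᵥ A *ᵥ u := by
  rw [Matrix.dotProduct_mulVec, ← Matrix.mulVec_transpose, hA, dotProduct_comm]

lemma key_identity {n : ℕ} {k : Type*} [Fintype k] [DecidableEq k]
    (A : Matrix (Fin n) (Fin n) ℝ) (hA : Aᵀ = A)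
    (P : Matrix (Fin n) k ℝ) (hW : (-(Pᵀ * A * P)).PosDef)
    (x : Fin n → ℝ) (z : k → ℝ) :
    (x + P *ᵥ z) ⬝ᵥ A *ᵥ (x + P *ᵥ z)
      = x ⬝ᵥ (A - A * P * (Pᵀ * A * P)⁻¹ * Pᵀ * A) *ᵥ x
        + (z + (Pᵀ * A * P)⁻¹ *ᵥ (Pᵀ *ᵥ (A *ᵥ x))) ⬝ᵥ
            (Pᵀ * A * P) *ᵥ (z + (Pᵀ * A * P)⁻¹ *ᵥ (Pᵀ *ᵥ (A *ᵥ x))) := by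
  set W := Pᵀ * A * P with hWdef
  have hWsym : Wᵀ = W := by
    simp [hWdef, Matrix.transpose_mul, hA, Matrix.mul_assoc]
  have hWunit : IsUnit W.det := by
    have h := hW.isUnit
    rw [Matrix.isUnit_iff_isUnit_det] at h
    rw [Matrix.det_neg] at h
    exact isUnit_of_mul_isUnit_right h
  have hWinv : W * W⁻¹ = 1 := Matrix.mul_nonsing_inv _ hWunit
  have hWiT : (W⁻¹)ᵀ = W⁻¹ := by rw [Matrix.transpose_nonsing_inv, hWsym]
  set y := Pᵀ *ᵥ (A *ᵥ x) with hy
  set w := W⁻¹ *ᵥ y with hwdef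
  have hWw : W *ᵥ w = y := by rw [hwdef, Matrix.mulVec_mulVec, hWinv, Matrix.one_mulVec]
  -- atoms
  have e1 : ∀ u : k → ℝ, x ⬝ᵥ A *ᵥ (P *ᵥ u) = u ⬝ᵥ y := by
    intro u
    rw [dot_sym_swap hA, dot_mulVec_left]
  have e2 : ∀ u v : k → ℝ, (P *ᵥ u) ⬝ᵥ A *ᵥ (P *ᵥ v) = u ⬝ᵥ W *ᵥ v := by
    intro u v
    rw [dot_mulVec_left, Matrix.mulVec_mulVec, Matrix.mulVec_mulVec, hWdef, Matrix.mul_assoc]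
  have e3 : (A * P * W⁻¹ * Pᵀ * A) *ᵥ x = A *ᵥ (P *ᵥ w) := by
    simp only [← Matrix.mulVec_mulVec, hwdef, hy]
  have hwy : w ⬝ᵥ y = y ⬝ᵥ W⁻¹ *ᵥ y := by
    rw [hwdef, dotProduct_comm, Matrix.dotProduct_mulVec, ← Matrix.mulVec_transpose, hWiT]
  have hzWw : z ⬝ᵥ W *ᵥ w = z ⬝ᵥ y := by rw [hWw]
  have hwWz : w ⬝ᵥ W *ᵥ z = z ⬝ᵥ y := by rw [dot_sym_swap hWsym, hWw]
  have hwWw : w ⬝ᵥ W *ᵥ w = y ⬝ᵥ W⁻¹ *ᵥ y := by rw [hWw, hwy]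
  have LHS : (x + P *ᵥ z) ⬝ᵥ A *ᵥ (x + P *ᵥ z)
      = x ⬝ᵥ A *ᵥ x + z ⬝ᵥ y + z ⬝ᵥ y + z ⬝ᵥ W *ᵥ z := by
    rw [Matrix.mulVec_add, dotProduct_add, add_dotProduct, add_dotProduct,
      e1 z, e2 z z, dot_mulVec_left, ← hy]
    ring
  rw [LHS, Matrix.sub_mulVec, dotProduct_sub, e3, e1 w, hwy,
    Matrix.mulVec_add, dotProduct_add, add_dotProduct, add_dotProduct,
    hzWw, hwWz, hwWw]
  ring

theorem stmt_7 {n q1 q2 : ℕ} (G : Matrix (Fin n) (Fin n) ℝ)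
    (hGsym : G.IsSymm) (hG : IsUnit G.det)
    (Nbar : Matrix (Fin n) (Fin q1) ℝ) (Nbeta : Matrix (Fin n) (Fin q2) ℝ)
    (Nα : Matrix (Fin n) (Fin q1 ⊕ Fin q2) ℝ)
    (hNα : Nα = Matrix.fromCols Nbar Nbeta)
    (hnd : (-(Nαᵀ * G⁻¹ * Nα)).PosDef)
    (Hbar Hα : Matrix (Fin n) (Fin n) ℝ)
    (hHbar : Hbar = G⁻¹ - G⁻¹ * Nbar * (Nbarᵀ * G⁻¹ * Nbar)⁻¹ * Nbarᵀ * G⁻¹)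
    (hHα : Hα = G⁻¹ - G⁻¹ * Nα * (Nαᵀ * G⁻¹ * Nα)⁻¹ * Nαᵀ * G⁻¹) :
    (Hα - Hbar).PosSemidef := by
  set A := G⁻¹ with hAdef
  have hA : Aᵀ = A := by
    rw [hAdef, Matrix.transpose_nonsing_inv, hGsym.eq]
  -- negative definiteness of the sub-block
  have hndbar : (-(Nbarᵀ * A * Nbar)).PosDef := by
    refine posDef_iff_dotProduct_mulVec.mpr ⟨?_, ?_⟩
    · have hsym : (-(Nbarᵀ * A * Nbar))ᵀ = -(Nbarᵀ * A * Nbar) := by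
        simp [Matrix.transpose_mul, hA, Matrix.mul_assoc]
      ext i j
      simp only [Matrix.conjTranspose_apply, star_trivial]
      exact congrFun (congrFun hsym i) j
    · intro u hu
      have hv : (Sum.elim u (0 : Fin q2 → ℝ)) ≠ 0 := by
        intro h
        apply hu
        funext i
        have := congrFun h (Sum.inl i)
        simpa using this
      have h := hnd.dotProduct_mulVec_pos hv
      have heq : (Sum.elim u (0 : Fin q2 → ℝ)) ⬝ᵥ (-(Nαᵀ * A * Nα)) *ᵥ (Sum.elim u 0)
          = u ⬝ᵥ (-(Nbarᵀ * A * Nbar)) *ᵥ u := by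
        have hNv : Nα *ᵥ Sum.elim u (0 : Fin q2 → ℝ) = Nbar *ᵥ u := by
          rw [hNα, Matrix.fromCols_mulVec_sumElim, Matrix.mulVec_zero, add_zero]
        rw [Matrix.neg_mulVec, dotProduct_neg, Matrix.neg_mulVec, dotProduct_neg]
        congr 1
        rw [← Matrix.mulVec_mulVec, ← Matrix.mulVec_mulVec, ← dot_mulVec_left,
          hNv, ← Matrix.mulVec_mulVec, ← Matrix.mulVec_mulVec, ← dot_mulVec_left]
      simp only [star_trivial] at h ⊢
      rw [heq] at h
      exact h
  have hndα : (-(Nαᵀ * A * Nα)).PosDef := hnd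
  refine posSemidef_iff_dotProduct_mulVec.mpr ⟨?_, ?_⟩
  · have hsymα : Hαᵀ = Hα := by
      rw [hHα]
      simp [Matrix.transpose_sub, Matrix.transpose_mul, Matrix.transpose_nonsing_inv,
        hA, Matrix.mul_assoc]
    have hsymb : Hbarᵀ = Hbar := by
      rw [hHbar]
      simp [Matrix.transpose_sub, Matrix.transpose_mul, Matrix.transpose_nonsing_inv,
        hA, Matrix.mul_assoc]
    ext i j
    simp only [Matrix.conjTranspose_apply, star_trivial, Matrix.sub_apply]
    have h1 := congrFun (congrFun hsymα j) i
    have h2 := congrFun (congrFun hsymb j) i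
    simp only [Matrix.transpose_apply] at h1 h2
    rw [h1, h2]
  · intro x
    simp only [star_trivial, Matrix.sub_mulVec, dotProduct_sub, sub_nonneg]
    set Wb := Nbarᵀ * A * Nbar with hWb
    set zs : Fin q1 → ℝ := -(Wb⁻¹ *ᵥ (Nbarᵀ *ᵥ (A *ᵥ x))) with hzs
    have heqb := key_identity A hA Nbar hndbar x zs
    have hzero : zs + Wb⁻¹ *ᵥ (Nbarᵀ *ᵥ (A *ᵥ x)) = 0 := by
      rw [hzs]; abel
    rw [hzero, Matrix.mulVec_zero, dotProduct_zero, add_zero] at heqb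
    have hw : Nα *ᵥ (Sum.elim zs (0 : Fin q2 → ℝ)) = Nbar *ᵥ zs := by
      rw [hNα, Matrix.fromCols_mulVec_sumElim, Matrix.mulVec_zero, add_zero]
    have heqa := key_identity A hA Nα hndα x (Sum.elim zs 0)
    rw [hw] at heqa
    have hle : (Sum.elim zs 0 + (Nαᵀ * A * Nα)⁻¹ *ᵥ (Nαᵀ *ᵥ (A *ᵥ x))) ⬝ᵥ
        (Nαᵀ * A * Nα) *ᵥ (Sum.elim zs 0 + (Nαᵀ * A * Nα)⁻¹ *ᵥ (Nαᵀ *ᵥ (A *ᵥ x))) ≤ 0 := by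
      set v := Sum.elim zs 0 + (Nαᵀ * A * Nα)⁻¹ *ᵥ (Nαᵀ *ᵥ (A *ᵥ x))
      have := hndα.posSemidef.dotProduct_mulVec_nonneg v
      simp only [star_trivial, Matrix.neg_mulVec, dotProduct_neg] at this
      linarith
    rw [hHbar, hHα, hWb]
    rw [← heqb, heqa]
    linarith
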